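/- Let R be a Noetherian ring and M₂, M₁, M₀ finitely generated R-modules with R-linear maps f : M₂ → M₁ and g : M₁ → M₀ such that g is surjective and range f = ker g (the sequence M₂ → M₁ → M₀ → 0 is exact). If len_R M₀ ♯ len_R M₂ ≤ len_R M₁, where ♯ is the natural (Hessenberg) sum of ordinals, then f is injective, i.e., the sequence 0 → M₂ → M₁ → M₀ → 0 is exact. -/

import Mathlib

open Ordinal

/-- Natural (Hessenberg) sum of ordinals, as defined in Mathlib's former
`Mathlib/SetTheory/Ordinal/NaturalOps.lean` (removed from Mathlib since). -/
noncomputable def Ordinal.nadd.{w} : Ordinal.{w} → Ordinal.{w} → Ordinal.{w}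
  | a, b =>
    max (blsub.{w, w} a fun a' _ => Ordinal.nadd a' b) (blsub.{w, w} b fun b' _ => Ordinal.nadd a b')
termination_by o₁ o₂ => (o₁, o₂)

infixl:65 " ♯ " => Ordinal.nadd

theorem nadd_lt_nadd_left {b c : Ordinal} (h : b < c) (a : Ordinal) : a ♯ b < a ♯ c := by
  rw [Ordinal.nadd.eq_1 a c]
  exact lt_of_lt_of_le (lt_blsub (fun b' _ => a ♯ b') b h) (le_max_right _ _)

theorem nadd_lt_nadd_right {b c : Ordinal} (h : b < c) (a : Ordinal) : b ♯ a < c ♯ a := by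
  rw [Ordinal.nadd.eq_1 c a]
  exact lt_of_lt_of_le (lt_blsub (fun a' _ => a' ♯ a) b h) (le_max_left _ _)

theorem nadd_le_nadd_left {b c : Ordinal} (h : b ≤ c) (a : Ordinal) : a ♯ b ≤ a ♯ c := by
  rcases h.lt_or_eq with h | rfl
  · exact (nadd_lt_nadd_left h a).le
  · exact le_rfl

theorem nadd_le_nadd_right {b c : Ordinal} (h : b ≤ c) (a : Ordinal) : b ♯ a ≤ c ♯ a := by
  rcases h.lt_or_eq with h | rfl
  · exact (nadd_lt_nadd_right h a).le
  · exact le_rfl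

/-- The ordinal length of a Noetherian module: the rank of the zero submodule in the
well-founded order of submodules under reverse inclusion. -/
noncomputable def moduleLength (R M : Type*) [Ring R] [AddCommGroup M] [Module R M]
    [IsNoetherian R M] : Ordinal :=
  IsWellFounded.rank (α := Submodule R M) (· > ·) ⊥

universe u v

/-- Ranks do not decrease along relation homomorphisms. -/
lemma rank_le_rank_of_relHom {α β : Type v} {r : α → α → Prop} {s : β → β → Prop}
    [IsWellFounded α r] [IsWellFounded β s] (f : α → β)
    (hf : ∀ ⦃a b⦄, r a b → s (f a) (f b)) (a : α) :
    IsWellFounded.rank r a ≤ IsWellFounded.rank s (f a) := by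
  induction a using IsWellFounded.induction r with
  | _ a ih =>
    rw [IsWellFounded.rank_eq]
    apply Ordinal.iSup_le
    rintro ⟨b, hb⟩
    exact Order.succ_le_of_lt ((ih b hb).trans_lt (IsWellFounded.rank_lt_of_rel (hf hb)))

variable {R : Type u} [Ring R] {M : Type v} [AddCommGroup M] [Module R M] [IsNoetherian R M]

local notation "rk" => IsWellFounded.rank (α := Submodule R _) (· > ·)

lemma rank_antitone {P P' : Submodule R M} (h : P ≤ P') : rk P' ≤ rk P := by
  rcases eq_or_lt_of_le h with rfl | h
  · exact le_rfl
  · exact (IsWellFounded.rank_lt_of_rel (r := ((· > ·) : Submodule R M → _ → Prop)) h).le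

/-- Subadditivity of submodule rank with respect to a submodule `N`. -/
lemma rank_le_nadd (N P : Submodule R M) :
    rk P ≤ rk (P.map N.mkQ) ♯ rk (P.comap N.subtype) := by
  induction P using IsWellFounded.induction ((· > ·) : Submodule R M → Submodule R M → Prop) with
  | _ P ih =>
    rw [IsWellFounded.rank_eq]
    apply Ordinal.iSup_le
    rintro ⟨P', hP'⟩
    apply Order.succ_le_of_lt
    refine (ih P' hP').trans_lt ?_
    have hPle : P ≤ P' := le_of_lt hP'
    have hm : P.map N.mkQ ≤ P'.map N.mkQ := Submodule.map_mono hPle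
    have hc : P.comap N.subtype ≤ P'.comap N.subtype := Submodule.comap_mono hPle
    -- not both equal
    have hne : P.map N.mkQ ≠ P'.map N.mkQ ∨ P.comap N.subtype ≠ P'.comap N.subtype := by
      by_contra hcon
      push_neg at hcon
      obtain ⟨h1, h2⟩ := hcon
      have hsup : P' ⊔ N ≤ P ⊔ N := by
        have := congrArg (Submodule.comap N.mkQ) h1
        rw [Submodule.comap_map_mkQ, Submodule.comap_map_mkQ] at this
        rw [sup_comm P' N, sup_comm P N, this]
      have hinf : P' ⊓ N ≤ P ⊓ N := by
        have := congrArg (Submodule.map N.subtype) h2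
        rw [Submodule.map_comap_subtype, Submodule.map_comap_subtype] at this
        rw [inf_comm P' N, inf_comm P N, this]
      exact (ne_of_lt hP') (eq_of_le_of_inf_le_of_sup_le hPle hinf hsup)
    rcases hne with hne | hne
    · have h1 : rk (P'.map N.mkQ) < rk (P.map N.mkQ) :=
        IsWellFounded.rank_lt_of_rel (lt_of_le_of_ne hm hne)
      calc rk (P'.map N.mkQ) ♯ rk (P'.comap N.subtype)
          ≤ rk (P'.map N.mkQ) ♯ rk (P.comap N.subtype) :=
            nadd_le_nadd_left (rank_antitone hc) _
        _ < rk (P.map N.mkQ) ♯ rk (P.comap N.subtype) := nadd_lt_nadd_right h1 _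
    · have h1 : rk (P'.comap N.subtype) < rk (P.comap N.subtype) :=
        IsWellFounded.rank_lt_of_rel (lt_of_le_of_ne hc hne)
      calc rk (P'.map N.mkQ) ♯ rk (P'.comap N.subtype)
          ≤ rk (P.map N.mkQ) ♯ rk (P'.comap N.subtype) :=
            nadd_le_nadd_right (rank_antitone hm) _
        _ < rk (P.map N.mkQ) ♯ rk (P.comap N.subtype) := nadd_lt_nadd_left h1 _

lemma moduleLength_le_nadd (N : Submodule R M) :
    moduleLength R M ≤ moduleLength R (M ⧸ N) ♯ moduleLength R N := by
  have := rank_le_nadd (R := R) (M := M) N ⊥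
  simpa [moduleLength, Submodule.map_bot, Submodule.comap_bot, Submodule.ker_subtype] using this

lemma moduleLength_congr {M' : Type v} [AddCommGroup M'] [Module R M'] [IsNoetherian R M']
    (e : M ≃ₗ[R] M') : moduleLength R M = moduleLength R M' := by
  have h1 := rank_le_rank_of_relHom (r := ((· > ·) : Submodule R M → _ → Prop))
      (s := ((· > ·) : Submodule R M' → _ → Prop))
      (Submodule.orderIsoMapComap e)
      (fun a b hab => (Submodule.orderIsoMapComap e).lt_iff_lt.2 hab) ⊥
  have h2 := rank_le_rank_of_relHom (r := ((· > ·) : Submodule R M' → _ → Prop))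
      (s := ((· > ·) : Submodule R M → _ → Prop))
      (Submodule.orderIsoMapComap e).symm
      (fun a b hab => (Submodule.orderIsoMapComap e).symm.lt_iff_lt.2 hab) ⊥
  have hb1 : (Submodule.orderIsoMapComap e) ⊥ = ⊥ := by
    simp [Submodule.orderIsoMapComap]
  have hb2 : (Submodule.orderIsoMapComap e).symm ⊥ = ⊥ := by
    rw [← hb1, OrderIso.symm_apply_apply]
  rw [hb1] at h1; rw [hb2] at h2
  exact le_antisymm h1 h2

lemma moduleLength_quotient_lt {N : Submodule R M} (hN : N ≠ ⊥) :
    moduleLength R (M ⧸ N) < moduleLength R M := by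
  have h1 : moduleLength R (M ⧸ N) ≤ rk N := by
    have := rank_le_rank_of_relHom (r := ((· > ·) : Submodule R (M ⧸ N) → _ → Prop))
        (s := ((· > ·) : Submodule R M → _ → Prop))
        (Submodule.comap N.mkQ)
        (fun a b hab => ?_) ⊥
    · simpa [moduleLength, Submodule.comap_bot, Submodule.ker_mkQ] using this
    · refine lt_of_le_of_ne (Submodule.comap_mono hab.le) fun hcon => ?_
      have := congrArg (Submodule.map N.mkQ) hcon
      rw [Submodule.map_comap_eq_of_surjective N.mkQ_surjective,
        Submodule.map_comap_eq_of_surjective N.mkQ_surjective] at this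
      exact (ne_of_lt hab) this
  have h2 : rk N < moduleLength R M :=
    IsWellFounded.rank_lt_of_rel (r := ((· > ·) : Submodule R M → _ → Prop))
      (bot_lt_iff_ne_bot.2 hN)
  exact h1.trans_lt h2

/-- Length criterion for acyclicity: if `M₂ → M₁ → M₀ → 0` is exact and
`len M₀ ♯ len M₂ ≤ len M₁`, then the first map is injective, i.e.
`0 → M₂ → M₁ → M₀ → 0` is exact. -/
theorem injective_of_nadd_le
    (R : Type u) [CommRing R] [IsNoetherianRing R]
    (M₂ M₁ M₀ : Type v) [AddCommGroup M₂] [AddCommGroup M₁] [AddCommGroup M₀]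
    [Module R M₂] [Module R M₁] [Module R M₀]
    [Module.Finite R M₂] [Module.Finite R M₁] [Module.Finite R M₀]
    (f : M₂ →ₗ[R] M₁) (g : M₁ →ₗ[R] M₀)
    (hg : Function.Surjective g) (hexact : LinearMap.range f = LinearMap.ker g)
    (hlen : moduleLength R M₀ ♯ moduleLength R M₂ ≤ moduleLength R M₁) :
    Function.Injective f := by
  rw [← LinearMap.ker_eq_bot]
  by_contra hK
  -- length of the kernel of g
  have e0 : (M₁ ⧸ LinearMap.ker g) ≃ₗ[R] M₀ := g.quotKerEquivOfSurjective hg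
  have e1 : (M₂ ⧸ LinearMap.ker f) ≃ₗ[R] LinearMap.ker g :=
    f.quotKerEquivRange.trans (LinearEquiv.ofEq _ _ hexact)
  have h1 : moduleLength R M₁ ≤
      moduleLength R (M₁ ⧸ LinearMap.ker g) ♯ moduleLength R (LinearMap.ker g) :=
    moduleLength_le_nadd _
  have h2 : moduleLength R (M₁ ⧸ LinearMap.ker g) = moduleLength R M₀ :=
    moduleLength_congr e0
  have h3 : moduleLength R (LinearMap.ker g) = moduleLength R (M₂ ⧸ LinearMap.ker f) :=
    (moduleLength_congr e1).symm
  have h4 : moduleLength R (M₂ ⧸ LinearMap.ker f) < moduleLength R M₂ :=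
    moduleLength_quotient_lt hK
  have : moduleLength R M₁ < moduleLength R M₁ := by
    calc moduleLength R M₁
        ≤ moduleLength R (M₁ ⧸ LinearMap.ker g) ♯ moduleLength R (LinearMap.ker g) := h1
      _ = moduleLength R M₀ ♯ moduleLength R (M₂ ⧸ LinearMap.ker f) := by rw [h2, h3]
      _ < moduleLength R M₀ ♯ moduleLength R M₂ := nadd_lt_nadd_left h4 _
      _ ≤ moduleLength R M₁ := hlen
  exact absurd this (lt_irrefl _)
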